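/- The paperclip satisfies the graphical curve shortening equation: for t < 0 and y with e^{−t}·cos y > 1, the function u(y,t) = log( w + √(w² − 1) ) with w = e^{−t}·cos y (i.e. u = arccosh(e^{−t}cos y)) satisfies u_t·(1 + u_y²) = u_yy; explicitly, with Q = √(w² − 1) and s = e^{−t}, u_t = −w/Q, u_y = −s·sin y/Q, 1 + u_y² = (s² − 1)/Q², and u_yy = −w(s² − 1)/Q³. -/

import Mathlib

/-- Derivative of `arccosh ∘ f` written as `log (f + √(f² − 1))`. -/
lemma arccosh_deriv (f : ℝ → ℝ) (x f' : ℝ) (hf : HasDerivAt f f' x) (h1 : 1 < f x) :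
    HasDerivAt (fun z => Real.log (f z + Real.sqrt ((f z) ^ 2 - 1)))
      (f' / Real.sqrt ((f x) ^ 2 - 1)) x := by
  have hpos : 0 < (f x) ^ 2 - 1 := by nlinarith
  have hQ : 0 < Real.sqrt ((f x) ^ 2 - 1) := Real.sqrt_pos.2 hpos
  have hinner : HasDerivAt (fun z => (f z) ^ 2 - 1) (2 * f x ^ 1 * f') x :=
    (hf.pow 2).sub_const 1
  have hsqrt := hinner.sqrt (ne_of_gt hpos)
  have hsum := hf.add hsqrt
  have hne : f x + Real.sqrt ((f x) ^ 2 - 1) ≠ 0 := by positivity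
  have := hsum.log hne
  refine this.congr_deriv ?_
  simp only [Pi.add_apply]
  field_simp
  ring

/-- The paperclip branch `u(y,t) = log(w + √(w² − 1))`, `w = e^{−t} cos y > 1`,
satisfies the graphical curve shortening equation `u_t(1 + u_y²) = u_yy`:
with `Q = √(w² − 1)` and `s = e^{−t}`, `u_t = −w/Q`, `u_y = −s sin y/Q`,
`1 + u_y² = (s² − 1)/Q²`, `u_yy = −w(s² − 1)/Q³`, and the equation holds. -/
theorem paperclip_graphical (t y : ℝ) (ht : t < 0)
    (hw : 1 < Real.exp (-t) * Real.cos y) :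
    HasDerivAt
      (fun τ : ℝ => Real.log (Real.exp (-τ) * Real.cos y +
        Real.sqrt ((Real.exp (-τ) * Real.cos y) ^ 2 - 1)))
      (-(Real.exp (-t) * Real.cos y) /
        Real.sqrt ((Real.exp (-t) * Real.cos y) ^ 2 - 1)) t ∧
    HasDerivAt
      (fun η : ℝ => Real.log (Real.exp (-t) * Real.cos η +
        Real.sqrt ((Real.exp (-t) * Real.cos η) ^ 2 - 1)))
      (-(Real.exp (-t) * Real.sin y) /
        Real.sqrt ((Real.exp (-t) * Real.cos y) ^ 2 - 1)) y ∧
    1 + (-(Real.exp (-t) * Real.sin y) /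
          Real.sqrt ((Real.exp (-t) * Real.cos y) ^ 2 - 1)) ^ 2 =
      (Real.exp (-t) ^ 2 - 1) / Real.sqrt ((Real.exp (-t) * Real.cos y) ^ 2 - 1) ^ 2 ∧
    HasDerivAt
      (fun η : ℝ => -(Real.exp (-t) * Real.sin η) /
        Real.sqrt ((Real.exp (-t) * Real.cos η) ^ 2 - 1))
      (-(Real.exp (-t) * Real.cos y) * (Real.exp (-t) ^ 2 - 1) /
        Real.sqrt ((Real.exp (-t) * Real.cos y) ^ 2 - 1) ^ 3) y ∧
    (-(Real.exp (-t) * Real.cos y) /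
        Real.sqrt ((Real.exp (-t) * Real.cos y) ^ 2 - 1)) *
      ((Real.exp (-t) ^ 2 - 1) / Real.sqrt ((Real.exp (-t) * Real.cos y) ^ 2 - 1) ^ 2) =
      -(Real.exp (-t) * Real.cos y) * (Real.exp (-t) ^ 2 - 1) /
        Real.sqrt ((Real.exp (-t) * Real.cos y) ^ 2 - 1) ^ 3 := by
  set s := Real.exp (-t) with hs
  have hpos : 0 < (s * Real.cos y) ^ 2 - 1 := by nlinarith
  have hQ : 0 < Real.sqrt ((s * Real.cos y) ^ 2 - 1) := Real.sqrt_pos.2 hpos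
  set Q := Real.sqrt ((s * Real.cos y) ^ 2 - 1) with hQdef
  have hQ2 : Q ^ 2 = (s * Real.cos y) ^ 2 - 1 := Real.sq_sqrt hpos.le
  have hsc := Real.sin_sq_add_cos_sq y
  -- derivative in τ of τ ↦ exp(-τ) * cos y
  have hf1 : HasDerivAt (fun τ : ℝ => Real.exp (-τ) * Real.cos y)
      (-(s * Real.cos y)) t := by
    have h := ((Real.hasDerivAt_exp (-t)).comp t ((hasDerivAt_id t).neg)).mul_const
      (Real.cos y)
    refine h.congr_deriv ?_
    simp [hs]
  -- derivative in η of η ↦ s * cos η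
  have hf2 : HasDerivAt (fun η : ℝ => s * Real.cos η) (-(s * Real.sin y)) y := by
    have h := (Real.hasDerivAt_cos y).const_mul s
    refine h.congr_deriv ?_; ring
  refine ⟨?_, ?_, ?_, ?_, ?_⟩
  · exact arccosh_deriv _ t _ hf1 hw
  · exact arccosh_deriv _ y _ hf2 hw
  · field_simp
    linear_combination hQ2 + s ^ 2 * hsc
  · -- quotient rule
    have hg : HasDerivAt (fun η : ℝ => -(s * Real.sin η)) (-(s * Real.cos y)) y :=
      ((Real.hasDerivAt_sin y).const_mul s).neg
    have hinner : HasDerivAt (fun η : ℝ => (s * Real.cos η) ^ 2 - 1)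
        (2 * (s * Real.cos y) ^ 1 * (-(s * Real.sin y))) y := (hf2.pow 2).sub_const 1
    have hh := hinner.sqrt (ne_of_gt hpos)
    have hdiv := hg.div hh (ne_of_gt hQ)
    refine hdiv.congr_deriv ?_
    rw [← hQdef]
    rw [div_eq_div_iff (by positivity) (by positivity)]
    field_simp
    linear_combination (-(s * Real.cos y)) * hQ2 +
      (-(s ^ 3 * Real.cos y)) * hsc
  · rw [div_mul_div_comm, div_eq_div_iff (by positivity) (by positivity)]
    ring
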